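/- Let x, y₁, y₂ ∈ S and 0 ≤ α ≤ 1. Then ‖δ_x − αδ_{y₁} − (1−α)δ_{y₂}‖*_FM = α·min(2, d(x,y₁)) + (1−α)·min(2, d(x,y₂)). -/

import Mathlib

open MeasureTheory

lemma aux_integrable {S : Type*} [MetricSpace S] [MeasurableSpace S] [BorelSpace S]
    {f : S → ℝ} (hf : LipschitzWith 1 f) (y : S) (c : ℝ) :
    Integrable f (ENNReal.ofReal c • Measure.dirac y) := by
  refine ⟨hf.continuous.stronglyMeasurable.aestronglyMeasurable, ?_⟩
  rw [HasFiniteIntegral, lintegral_smul_measure,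
    lintegral_dirac' _ hf.continuous.measurable.enorm]
  exact ENNReal.mul_lt_top ENNReal.ofReal_lt_top (by simp)

lemma aux_integral {S : Type*} [MetricSpace S] [MeasurableSpace S] [BorelSpace S]
    {f : S → ℝ} (hf : LipschitzWith 1 f) (y : S) {c : ℝ} (hc : 0 ≤ c) :
    ∫ z, f z ∂(ENNReal.ofReal c • Measure.dirac y) = c * f y := by
  rw [integral_smul_measure, integral_dirac' f y hf.continuous.stronglyMeasurable]
  simp [ENNReal.toReal_ofReal hc]

lemma aux_f_lip {S : Type*} [MetricSpace S] (x : S) :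
    LipschitzWith 1 (fun z => 1 - min 2 (dist x z)) := by
  have h1 : LipschitzWith 1 (fun z : S => min 2 (dist x z)) := by
    simpa using (LipschitzWith.const' (2:ℝ) (K := 1)).min (LipschitzWith.dist_right x)
  have h2 : LipschitzWith 1 (fun t : ℝ => 1 - t) :=
    LipschitzWith.of_dist_le_mul fun a b => by
      simp [Real.dist_eq, abs_sub_comm]; exact le_of_eq (by ring_nf)
  simpa [Function.comp_def] using h2.comp h1

lemma aux_gap {S : Type*} [MetricSpace S] {f : S → ℝ} (hf : LipschitzWith 1 f)
    (hb : ∀ z, |f z| ≤ 1) (x y : S) : f x - f y ≤ min 2 (dist x y) := by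
  refine le_min ?_ ?_
  · have h1 := (abs_le.1 (hb x)).2
    have h2 := (abs_le.1 (hb y)).1
    linarith
  · exact (le_abs_self _).trans (by simpa [Real.dist_eq] using hf.dist_le_mul x y)

/-- distance from a Dirac to a convex combination of two Diracs. -/
theorem stmt_8 {S : Type*} [MetricSpace S] [MeasurableSpace S] [BorelSpace S]
    (x y₁ y₂ : S) (α : ℝ) (hα0 : 0 ≤ α) (hα1 : α ≤ 1) :
    sSup {r : ℝ | ∃ f : S → ℝ, LipschitzWith 1 f ∧ (∀ z, |f z| ≤ 1) ∧
        r = ∫ z, f z ∂(Measure.dirac x) -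
          ∫ z, f z ∂(ENNReal.ofReal α • Measure.dirac y₁ +
            ENNReal.ofReal (1 - α) • Measure.dirac y₂)}
      = α * min 2 (dist x y₁) + (1 - α) * min 2 (dist x y₂) := by
  have hβ0 : (0:ℝ) ≤ 1 - α := by linarith
  have hval : ∀ f : S → ℝ, LipschitzWith 1 f →
      (∫ z, f z ∂(Measure.dirac x) -
          ∫ z, f z ∂(ENNReal.ofReal α • Measure.dirac y₁ +
            ENNReal.ofReal (1 - α) • Measure.dirac y₂))
      = f x - (α * f y₁ + (1 - α) * f y₂) := by
    intro f hf
    rw [integral_dirac' f x hf.continuous.stronglyMeasurable,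
      integral_add_measure (aux_integrable hf y₁ α) (aux_integrable hf y₂ (1 - α)),
      aux_integral hf y₁ hα0, aux_integral hf y₂ hβ0]
  have hub : ∀ r ∈ {r : ℝ | ∃ f : S → ℝ, LipschitzWith 1 f ∧ (∀ z, |f z| ≤ 1) ∧
        r = ∫ z, f z ∂(Measure.dirac x) -
          ∫ z, f z ∂(ENNReal.ofReal α • Measure.dirac y₁ +
            ENNReal.ofReal (1 - α) • Measure.dirac y₂)},
      r ≤ α * min 2 (dist x y₁) + (1 - α) * min 2 (dist x y₂) := by
    rintro r ⟨f, hf, hb, rfl⟩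
    rw [hval f hf]
    have h1 := aux_gap hf hb x y₁
    have h2 := aux_gap hf hb x y₂
    nlinarith [mul_le_mul_of_nonneg_left h1 hα0, mul_le_mul_of_nonneg_left h2 hβ0]
  have hmem : α * min 2 (dist x y₁) + (1 - α) * min 2 (dist x y₂) ∈
      {r : ℝ | ∃ f : S → ℝ, LipschitzWith 1 f ∧ (∀ z, |f z| ≤ 1) ∧
        r = ∫ z, f z ∂(Measure.dirac x) -
          ∫ z, f z ∂(ENNReal.ofReal α • Measure.dirac y₁ +
            ENNReal.ofReal (1 - α) • Measure.dirac y₂)} := by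
    refine ⟨fun z => 1 - min 2 (dist x z), aux_f_lip x, ?_, ?_⟩
    · intro z
      have h0 : 0 ≤ min 2 (dist x z) := le_min (by norm_num) dist_nonneg
      have h2 : min 2 (dist x z) ≤ 2 := min_le_left _ _
      rw [abs_le]; dsimp only; constructor <;> linarith
    · rw [hval _ (aux_f_lip x)]
      have hxx : min (2:ℝ) (dist x x) = 0 := by simp
      rw [hxx]; ring
  exact le_antisymm (csSup_le ⟨_, hmem⟩ hub) (le_csSup ⟨_, hub⟩ hmem)
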